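/- Two connected skew diagrams θ and θ′ satisfy P(θ) ≅ P(θ′) as posets if and only if θ = θ′ or θ^T = θ′ (as translation classes of skew diagrams). -/

import Mathlib

/-- A cell (box) of the plane: `(row, column)`. -/
abbrev Cell : Type := ℤ × ℤ

/-- The transpose of a cell. -/
def transposeCell (c : Cell) : Cell := (c.2, c.1)

/-- Equality of diagrams up to translation. -/
def TranslateEq (S T : Finset Cell) : Prop := ∃ v : Cell, T = S.image (· + v)

/-- A finite set of cells is a skew diagram iff it is order-convex for the
componentwise order; this characterizes the translates of the sets of boxes
`{(i,j) : λ_i < j ≤ μ_i}` for partitions `λ ⊆ μ`. -/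
def IsSkewDiagram (S : Finset Cell) : Prop :=
  ∀ a b c : Cell, a ∈ S → b ∈ S → a ≤ c → c ≤ b → c ∈ S

/-- The diagonal value `j − i` of a cell `(i, j)`. -/
def diagVal (c : Cell) : ℤ := c.2 - c.1

/-- A skew diagram is connected iff no NW-SE anti-diagonal line partitions it into
two nonempty parts, one strictly northeast and one strictly southwest of the line. -/
def SkewConnected (S : Finset Cell) : Prop :=
  ¬ ∃ d : ℤ, (∀ c ∈ S, diagVal c ≠ d) ∧ (∃ c ∈ S, diagVal c < d) ∧ (∃ c ∈ S, d < diagVal c)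

/-! ### Auxiliary development -/

def IsStep (u : Cell) : Prop := u = ((1:ℤ),(0:ℤ)) ∨ u = ((0:ℤ),(1:ℤ))

lemma isStep_nonneg {u : Cell} (h : IsStep u) : (0 : Cell) ≤ u := by
  rcases h with rfl | rfl <;> simp [Prod.le_def]

lemma isStep_ne_zero {u : Cell} (h : IsStep u) : u ≠ 0 := by
  rcases h with rfl | rfl <;> simp [Prod.ext_iff]

structure IsoData (S T : Finset Cell) (f : Cell → Cell) : Prop where
  mem : ∀ c ∈ S, f c ∈ T
  mono : ∀ a ∈ S, ∀ b ∈ S, (a ≤ b ↔ f a ≤ f b)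
  surj : ∀ t ∈ T, ∃ c ∈ S, f c = t

lemma IsoData.inj {S T : Finset Cell} {f : Cell → Cell} (hf : IsoData S T f)
    {a b : Cell} (ha : a ∈ S) (hb : b ∈ S) (h : f a = f b) : a = b :=
  le_antisymm ((hf.mono a ha b hb).mpr h.le) ((hf.mono b hb a ha).mpr h.ge)

lemma preimage_between {S T : Finset Cell} {f : Cell → Cell} (hf : IsoData S T f)
    (hT : IsSkewDiagram T) {x y : Cell} (hx : x ∈ S) (hy : y ∈ S) {t : Cell}
    (h1 : f x ≤ t) (h2 : t ≤ f y) (h3 : t ≠ f x) (h4 : t ≠ f y) :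
    ∃ s ∈ S, f s = t ∧ x ≤ s ∧ s ≤ y ∧ s ≠ x ∧ s ≠ y := by
  have ht : t ∈ T := hT (f x) (f y) t (hf.mem x hx) (hf.mem y hy) h1 h2
  obtain ⟨s, hs, hfs⟩ := hf.surj t ht
  refine ⟨s, hs, hfs, (hf.mono x hx s hs).mpr (hfs ▸ h1), (hf.mono s hs y hy).mpr (hfs ▸ h2),
    ?_, ?_⟩
  · rintro rfl; exact h3 hfs.symm
  · rintro rfl; exact h4 hfs.symm

def Same (f : Cell → Cell) (a u : Cell) : Prop := f (a + u) = f a + u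

lemma step_image {S T : Finset Cell} {f : Cell → Cell} (hf : IsoData S T f)
    (hT : IsSkewDiagram T) {a u : Cell} (ha : a ∈ S) (hau : a + u ∈ S) (hu : IsStep u) :
    ∃ w, IsStep w ∧ f (a + u) = f a + w := by
  have hle : f a ≤ f (a + u) := (hf.mono a ha _ hau).mp (le_add_of_nonneg_right (isStep_nonneg hu))
  have hne : f a ≠ f (a + u) := fun h => isStep_ne_zero hu (left_eq_add.mp (hf.inj ha hau h))
  by_contra hns
  push_neg at hns
  have hq1 : f (a + u) ≠ f a + (1, 0) := hns (1, 0) (Or.inl rfl)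
  have hq2 : f (a + u) ≠ f a + (0, 1) := hns (0, 1) (Or.inr rfl)
  rw [Prod.le_def] at hle
  rw [Ne, Prod.ext_iff] at hne hq1 hq2
  simp only [Prod.fst_add, Prod.snd_add] at hq1 hq2
  obtain ⟨t, ht1, ht2, ht3, ht4⟩ : ∃ t : Cell, f a ≤ t ∧ t ≤ f (a + u) ∧ t ≠ f a ∧ t ≠ f (a + u) := by
    by_cases h1 : (f a).1 < (f (a + u)).1
    · refine ⟨((f a).1 + 1, (f a).2), ?_, ?_, ?_, ?_⟩ <;>
        simp only [Prod.le_def, Ne, Prod.ext_iff] <;> omega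
    · refine ⟨((f a).1, (f a).2 + 1), ?_, ?_, ?_, ?_⟩ <;>
        simp only [Prod.le_def, Ne, Prod.ext_iff] <;> omega
  obtain ⟨s, hs, hfs, hxs, hsy, hsx, hsyne⟩ := preimage_between hf hT ha hau ht1 ht2 ht3 ht4
  rw [Prod.le_def] at hxs hsy
  rw [Ne, Prod.ext_iff] at hsx hsyne
  rcases hu with rfl | rfl <;> simp only [Prod.fst_add, Prod.snd_add] at hsy hsyne <;> omega

lemma between_of_double {S T : Finset Cell} {f : Cell → Cell} (hf : IsoData S T f)
    {x y b : Cell} (hx : x ∈ S) (hy : y ∈ S) (hb : b ∈ S) (hxb : x ≤ b) (hby : b ≤ y)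
    (hbx : b ≠ x) (hbyne : b ≠ y) {u : Cell} (hu : IsStep u) (hxy : f y = f x + u + u) :
    f b = f x + u := by
  have h1 : f x ≤ f b := (hf.mono x hx b hb).mp hxb
  have h2 : f b ≤ f y := (hf.mono b hb y hy).mp hby
  have h3 : f b ≠ f x := fun h => hbx (hf.inj hb hx h)
  have h4 : f b ≠ f y := fun h => hbyne (hf.inj hb hy h)
  rw [hxy] at h2 h4
  rw [Prod.le_def] at h1 h2
  rw [Ne, Prod.ext_iff] at h3 h4
  rw [Prod.ext_iff]
  rcases hu with rfl | rfl <;>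
    simp only [Prod.fst_add, Prod.snd_add] at h2 h4 ⊢ <;> omega

lemma no_diag {S T : Finset Cell} {f : Cell → Cell} (hf : IsoData S T f)
    (hT : IsSkewDiagram T) {b a c u : Cell} (hb : b ∈ S) (hba : b + u = a) (ha : a ∈ S)
    (hac : a + u = c) (hc : c ∈ S) (hu : IsStep u)
    (heq : f c = f b + ((1:ℤ), (1:ℤ))) : False := by
  have key : ∀ e : Cell, IsStep e → ∃ s ∈ S, f s = f b + e ∧ s = a := by
    intro e he
    have h1 : f b ≤ f b + e := le_add_of_nonneg_right (isStep_nonneg he)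
    have h2 : f b + e ≤ f c := by
      rw [heq]; rcases he with rfl | rfl <;> simp [Prod.le_def]
    have h3 : f b + e ≠ f b := by
      simpa using isStep_ne_zero he
    have h4 : f b + e ≠ f c := by
      rw [heq, Ne, Prod.ext_iff]
      rcases he with rfl | rfl <;> simp
    obtain ⟨s, hs, hfs, hxs, hsy, hsx, hsyne⟩ := preimage_between hf hT hb hc h1 h2 h3 h4
    refine ⟨s, hs, hfs, ?_⟩
    subst hba hac
    rw [Prod.le_def] at hxs hsy
    rw [Ne, Prod.ext_iff] at hsx hsyne
    rw [Prod.ext_iff]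
    rcases hu with rfl | rfl <;>
      simp only [Prod.fst_add, Prod.snd_add] at hxs hsy hsx hsyne ⊢ <;> omega
  obtain ⟨s1, hs1, hfs1, rfl⟩ := key (1, 0) (Or.inl rfl)
  obtain ⟨s2, hs2, hfs2, heq2⟩ := key (0, 1) (Or.inr rfl)
  subst heq2
  rw [hfs1] at hfs2
  simp [Prod.ext_iff] at hfs2

lemma steps_resolve {u v w : Cell} (hu : IsStep u) (hv : IsStep v) (hw : IsStep w)
    (huv : v ≠ u) (hwu : w ≠ u) : w = v := by
  rcases hu with rfl | rfl <;> rcases hv with rfl | rfl <;> rcases hw with rfl | rfl <;>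
    first | rfl | (exact absurd rfl huv) | (exact absurd rfl hwu)

lemma up_up {S T : Finset Cell} {f : Cell → Cell} (hf : IsoData S T f) (hT : IsSkewDiagram T)
    {a u v : Cell} (ha : a ∈ S) (hau : a + u ∈ S) (hav : a + v ∈ S)
    (hu : IsStep u) (hv : IsStep v) (hs : Same f a u) : Same f a v := by
  obtain ⟨w, hw, hfw⟩ := step_image hf hT ha hav hv
  by_cases huv : v = u
  · rw [huv]; exact hs
  have hwu : w ≠ u := by
    rintro rfl
    exact huv (add_left_cancel (hf.inj hav hau (by rw [hfw, hs])))
  rw [Same, hfw, steps_resolve hu hv hw huv hwu]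

lemma down_down {S T : Finset Cell} {f : Cell → Cell} (hf : IsoData S T f) (hT : IsSkewDiagram T)
    {b c a u v : Cell} (hb : b ∈ S) (hc : c ∈ S) (hba : b + u = a) (hca : c + v = a)
    (ha : a ∈ S) (hu : IsStep u) (hv : IsStep v) (hs : Same f b u) : Same f c v := by
  obtain ⟨w, hw, hfw⟩ := step_image hf hT hc (hca ▸ ha) hv
  by_cases huv : v = u
  · have hcu : c + u = a := huv ▸ hca
    have hcb : c = b := add_right_cancel (hcu.trans hba.symm)
    rw [huv, hcb]; exact hs
  have hwu : w ≠ u := by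
    intro hwu
    have hfc : f c = f b := by
      apply add_right_cancel (b := u)
      have h2 : f (b + u) = f b + u := hs
      rw [hba] at h2
      rw [← h2, ← hwu, ← hfw, hca]
    have hcb : c = b := hf.inj hc hb hfc
    have hcv : c + v = c + u := by rw [hca, ← hba, hcb]
    exact huv (add_left_cancel hcv)
  rw [Same, hfw, steps_resolve hu hv hw huv hwu]

lemma down_up {S T : Finset Cell} {f : Cell → Cell} (hf : IsoData S T f)
    (hS : IsSkewDiagram S) (hT : IsSkewDiagram T)
    {b a u v : Cell} (hb : b ∈ S) (hba : b + u = a) (ha : a ∈ S) (hav : a + v ∈ S)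
    (hu : IsStep u) (hv : IsStep v) (hs : Same f b u) : Same f a v := by
  obtain ⟨w, hw, hfw⟩ := step_image hf hT ha hav hv
  by_cases hwv : w = v
  · rw [Same, hfw, hwv]
  have hfb : f a = f b + u := by rw [← hba]; exact hs
  exfalso
  by_cases huv : v = u
  · have hw' : u + w = ((1:ℤ), (1:ℤ)) := by
      rcases hu with rfl | rfl <;> rcases hw with rfl | rfl <;>
        first | (exact absurd huv.symm hwv) | rfl
    refine no_diag hf hT hb hba ha (c := a + v) (by rw [huv]) hav hu ?_
    rw [hfw, hfb, add_assoc, hw']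
  · have hwu : w = u := steps_resolve hv hu hw (fun h => huv h.symm) hwv
    rw [hwu] at hfw
    have hmem : b + v ∈ S := by
      refine hS b (a + v) (b + v) hb hav (le_add_of_nonneg_right (isStep_nonneg hv)) ?_
      rw [← hba, add_right_comm]
      exact le_add_of_nonneg_right (isStep_nonneg hu)
    have hmid : f (b + v) = f b + u := by
      refine between_of_double hf hb hav hmem (le_add_of_nonneg_right (isStep_nonneg hv))
        ?_ ?_ ?_ hu ?_
      · rw [← hba, add_right_comm]; exact le_add_of_nonneg_right (isStep_nonneg hu)
      · simpa using isStep_ne_zero hv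
      · rw [← hba, add_right_comm]; simpa using isStep_ne_zero hu
      · rw [hfw, hfb]
    have hba' : b + v = a := hf.inj hmem ha (by rw [hmid, hfb])
    rw [← hba] at hba'
    exact huv (add_left_cancel hba')

lemma up_down {S T : Finset Cell} {f : Cell → Cell} (hf : IsoData S T f)
    (hS : IsSkewDiagram S) (hT : IsSkewDiagram T)
    {a u c v : Cell} (ha : a ∈ S) (hau : a + u ∈ S) (hc : c ∈ S) (hca : c + v = a)
    (hu : IsStep u) (hv : IsStep v) (hs : Same f a u) : Same f c v := by
  obtain ⟨w, hw, hfw⟩ := step_image hf hT hc (hca ▸ ha) hv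
  rw [hca] at hfw
  by_cases hwv : w = v
  · show f (c + v) = f c + v
    rw [hca, hfw, hwv]
  exfalso
  by_cases huv : v = u
  · have hw' : w + u = ((1:ℤ), (1:ℤ)) := by
      rcases hu with rfl | rfl <;> rcases hw with rfl | rfl <;>
        first | (exact absurd huv.symm hwv) | rfl
    refine no_diag hf hT hc (show c + u = a by rw [← huv]; exact hca) ha rfl hau hu ?_
    rw [hs, hfw, add_assoc, hw']
  · have hwu : w = u := steps_resolve hv hu hw (fun h => huv h.symm) hwv
    rw [hwu] at hfw
    have hmem : c + u ∈ S := by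
      refine hS c (a + u) (c + u) hc hau (le_add_of_nonneg_right (isStep_nonneg hu)) ?_
      rw [← hca, add_right_comm]
      exact le_add_of_nonneg_right (isStep_nonneg hv)
    have hmid : f (c + u) = f c + u := by
      refine between_of_double hf hc hau hmem (le_add_of_nonneg_right (isStep_nonneg hu))
        ?_ ?_ ?_ hu ?_
      · rw [← hca, add_right_comm]; exact le_add_of_nonneg_right (isStep_nonneg hv)
      · simpa using isStep_ne_zero hu
      · rw [← hca, add_right_comm]; simpa using isStep_ne_zero hv
      · rw [hs, hfw]
    have hca' : c + u = a := hf.inj hmem ha (by rw [hmid, ← hfw])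
    rw [← hca] at hca'
    exact huv (add_left_cancel hca').symm

def GoodAt (S : Finset Cell) (f : Cell → Cell) (a : Cell) : Prop :=
  (∀ u, IsStep u → a + u ∈ S → Same f a u) ∧
  (∀ b u, IsStep u → b ∈ S → b + u = a → Same f b u)

def Adj (S : Finset Cell) (a b : Cell) : Prop :=
  a ∈ S ∧ b ∈ S ∧ ∃ u, IsStep u ∧ (b = a + u ∨ a = b + u)

lemma adj_symm {S : Finset Cell} : Symmetric (Adj S) := by
  rintro a b ⟨ha, hb, u, hu, h⟩
  exact ⟨hb, ha, u, hu, h.symm⟩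

lemma goodAt_of_up {S T : Finset Cell} {f : Cell → Cell} (hf : IsoData S T f)
    (hS : IsSkewDiagram S) (hT : IsSkewDiagram T) {a u : Cell}
    (ha : a ∈ S) (hu : IsStep u) (hau : a + u ∈ S) (hs : Same f a u) : GoodAt S f a :=
  ⟨fun v hv hav => up_up hf hT ha hau hav hu hv hs,
   fun b v hv hb hba => up_down hf hS hT ha hau hb hba hu hv hs⟩

lemma goodAt_of_down {S T : Finset Cell} {f : Cell → Cell} (hf : IsoData S T f)
    (hS : IsSkewDiagram S) (hT : IsSkewDiagram T) {b a u : Cell}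
    (hb : b ∈ S) (hu : IsStep u) (hba : b + u = a) (ha : a ∈ S) (hs : Same f b u) :
    GoodAt S f a :=
  ⟨fun v hv hav => down_up hf hS hT hb hba ha hav hu hv hs,
   fun c v hv hc hca => down_down hf hT hb hc hba hca ha hu hv hs⟩

lemma goodAt_adj {S T : Finset Cell} {f : Cell → Cell} (hf : IsoData S T f)
    (hS : IsSkewDiagram S) (hT : IsSkewDiagram T) {a b : Cell}
    (hadj : Adj S a b) (hg : GoodAt S f a) : GoodAt S f b := by
  obtain ⟨ha, hb, u, hu, h | h⟩ := hadj
  · exact goodAt_of_down hf hS hT ha hu h.symm hb (hg.1 u hu (h ▸ hb))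
  · exact goodAt_of_up hf hS hT hb hu (h ▸ ha) (hg.2 b u hu hb h.symm)

lemma good_rtg {S T : Finset Cell} {f : Cell → Cell} (hf : IsoData S T f)
    (hS : IsSkewDiagram S) (hT : IsSkewDiagram T) {a c : Cell}
    (h : Relation.ReflTransGen (Adj S) a c) (hg : GoodAt S f a) : GoodAt S f c := by
  induction h with
  | refl => exact hg
  | tail _ h2 ih => exact goodAt_adj hf hS hT h2 ih

lemma offset_rtg {S : Finset Cell} {f : Cell → Cell} {a c : Cell}
    (h : Relation.ReflTransGen (Adj S) a c) (hgood : ∀ x ∈ S, GoodAt S f x) :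
    f c - c = f a - a := by
  induction h with
  | refl => rfl
  | @tail b c _ h2 ih =>
    obtain ⟨hb, hc, u, hu, h | h⟩ := h2
    · have hs : Same f b u := (hgood b hb).1 u hu (h ▸ hc)
      rw [h, hs, add_sub_add_right_eq_sub, ih]
    · have hs : Same f c u := (hgood c hc).1 u hu (h ▸ hb)
      rw [h, hs, add_sub_add_right_eq_sub] at ih
      exact ih

/-! ### Connectivity of the Hasse graph -/

lemma comp_conn {S : Finset Cell} (hS : IsSkewDiagram S) :
    ∀ n : ℕ, ∀ a b : Cell, a ∈ S → b ∈ S → a ≤ b → (b.1 - a.1 + (b.2 - a.2)).toNat ≤ n →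
      Relation.ReflTransGen (Adj S) a b := by
  intro n
  induction n with
  | zero =>
    intro a b ha hb hab h
    have : a = b := by
      rw [Prod.le_def] at hab; rw [Prod.ext_iff]; omega
    subst this; exact .refl
  | succ n ih =>
    intro a b ha hb hab h
    by_cases he : a = b
    · subst he; exact .refl
    rw [Prod.le_def] at hab
    have hne : ¬(a.1 = b.1 ∧ a.2 = b.2) := fun hc => he (Prod.ext hc.1 hc.2)
    by_cases h1 : a.1 < b.1
    · have hc : ((a.1 + 1, a.2) : Cell) ∈ S :=
        hS a b _ ha hb (by rw [Prod.le_def]; constructor <;> simp)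
          (by rw [Prod.le_def]; constructor <;> simp <;> omega)
      have hadj : Adj S a (a.1 + 1, a.2) :=
        ⟨ha, hc, (1, 0), Or.inl rfl, Or.inl (by rw [Prod.ext_iff]; simp)⟩
      refine Relation.ReflTransGen.head hadj (ih _ b hc hb ?_ ?_)
      · rw [Prod.le_def]; constructor <;> simp <;> omega
      · simp; omega
    · have h2 : a.2 < b.2 := by omega
      have hc : ((a.1, a.2 + 1) : Cell) ∈ S :=
        hS a b _ ha hb (by rw [Prod.le_def]; constructor <;> simp)
          (by rw [Prod.le_def]; constructor <;> simp <;> omega)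
      have hadj : Adj S a (a.1, a.2 + 1) :=
        ⟨ha, hc, (0, 1), Or.inr rfl, Or.inl (by rw [Prod.ext_iff]; simp)⟩
      refine Relation.ReflTransGen.head hadj (ih _ b hc hb ?_ ?_)
      · rw [Prod.le_def]; constructor <;> simp <;> omega
      · simp; omega

lemma comparable_conn {S : Finset Cell} (hS : IsSkewDiagram S) {a b : Cell}
    (ha : a ∈ S) (hb : b ∈ S) (h : a ≤ b ∨ b ≤ a) :
    Relation.ReflTransGen (Adj S) a b := by
  rcases h with h | h
  · exact comp_conn hS _ a b ha hb h le_rfl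
  · exact (haveI : Std.Symm (Adj S) := ⟨fun _ _ h => adj_symm h⟩; Std.Symm.symm _ _ (comp_conn hS _ b a hb ha h le_rfl))

lemma comparable_of_close {a b : Cell} (h : (diagVal b - diagVal a).natAbs ≤ 1) :
    a ≤ b ∨ b ≤ a := by
  simp only [diagVal, Prod.le_def] at *
  omega

lemma cross {S : Finset Cell} (hcS : SkewConnected S) {a b : Cell} {d : ℤ}
    (ha : a ∈ S) (hb : b ∈ S) (h1 : diagVal a < d) (h2 : d < diagVal b) :
    ∃ c ∈ S, diagVal c = d := by
  by_contra h
  push_neg at h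
  exact hcS ⟨d, h, ⟨a, ha, h1⟩, ⟨b, hb, h2⟩⟩

lemma conn_aux {S : Finset Cell} (hS : IsSkewDiagram S) (hcS : SkewConnected S) :
    ∀ n : ℕ, ∀ a b : Cell, a ∈ S → b ∈ S → (diagVal b - diagVal a).natAbs ≤ n →
      Relation.ReflTransGen (Adj S) a b := by
  intro n
  induction n with
  | zero =>
    intro a b ha hb h
    exact comparable_conn hS ha hb (comparable_of_close (by omega))
  | succ n ih =>
    intro a b ha hb h
    by_cases hcl : (diagVal b - diagVal a).natAbs ≤ 1
    · exact comparable_conn hS ha hb (comparable_of_close hcl)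
    by_cases hpos : 0 < diagVal b - diagVal a
    · obtain ⟨c, hc, hdc⟩ := cross hcS ha hb (show diagVal a < diagVal a + 1 by omega)
        (show diagVal a + 1 < diagVal b by omega)
      exact (comparable_conn hS ha hc (comparable_of_close (by omega))).trans
        (ih c b hc hb (by omega))
    · obtain ⟨c, hc, hdc⟩ := cross hcS hb ha (show diagVal b < diagVal a - 1 by omega)
        (show diagVal a - 1 < diagVal a by omega)
      exact (comparable_conn hS ha hc (comparable_of_close (by omega))).trans
        (ih c b hc hb (by omega))

lemma conn {S : Finset Cell} (hS : IsSkewDiagram S) (hcS : SkewConnected S) :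
    ∀ a b : Cell, a ∈ S → b ∈ S → Relation.ReflTransGen (Adj S) a b :=
  fun a b ha hb => conn_aux hS hcS _ a b ha hb le_rfl

lemma main_translate {S T : Finset Cell} {f : Cell → Cell} (hf : IsoData S T f)
    (hS : IsSkewDiagram S) (hT : IsSkewDiagram T) (hcS : SkewConnected S)
    {a₀ u₀ : Cell} (ha₀ : a₀ ∈ S) (hu₀ : IsStep u₀) (hau₀ : a₀ + u₀ ∈ S)
    (hsame : Same f a₀ u₀) : TranslateEq S T := by
  have hgood : ∀ x ∈ S, GoodAt S f x := fun x hx =>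
    good_rtg hf hS hT (conn hS hcS a₀ x ha₀ hx) (goodAt_of_up hf hS hT ha₀ hu₀ hau₀ hsame)
  have hval : ∀ c ∈ S, f c = c + (f a₀ - a₀) := by
    intro c hc
    have h := offset_rtg (conn hS hcS a₀ c ha₀ hc) hgood
    rw [sub_eq_iff_eq_add] at h
    rw [h]; abel
  refine ⟨f a₀ - a₀, ?_⟩
  ext t
  simp only [Finset.mem_image]
  constructor
  · intro ht
    obtain ⟨c, hc, hfc⟩ := hf.surj t ht
    exact ⟨c, hc, by rw [← hfc, hval c hc]⟩
  · rintro ⟨c, hc, rfl⟩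
    have := hf.mem c hc
    rwa [hval c hc] at this

/-! ### Transpose -/

lemma transposeCell_le {a b : Cell} : transposeCell a ≤ transposeCell b ↔ a ≤ b := by
  simp [transposeCell, Prod.le_def, and_comm]

lemma mem_image_transpose {S : Finset Cell} {c : Cell} :
    c ∈ S.image transposeCell ↔ transposeCell c ∈ S := by
  simp only [Finset.mem_image]
  constructor
  · rintro ⟨a, ha, rfl⟩; exact ha
  · intro h; exact ⟨transposeCell c, h, rfl⟩

lemma isSkew_image {S : Finset Cell} (hS : IsSkewDiagram S) :
    IsSkewDiagram (S.image transposeCell) := by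
  intro a b c ha hb h1 h2
  rw [mem_image_transpose] at *
  exact hS _ _ _ ha hb (transposeCell_le.mpr h1) (transposeCell_le.mpr h2)

lemma diagVal_transpose (c : Cell) : diagVal (transposeCell c) = -diagVal c := by
  simp [diagVal, transposeCell]

lemma skewConnected_image {S : Finset Cell} (hc : SkewConnected S) :
    SkewConnected (S.image transposeCell) := by
  rintro ⟨d, h1, ⟨c2, hc2, hd2⟩, ⟨c3, hc3, hd3⟩⟩
  refine hc ⟨-d, ?_, ?_, ?_⟩
  · intro c hcS h
    refine h1 (transposeCell c) ?_ ?_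
    · exact mem_image_transpose.mpr (by rwa [show transposeCell (transposeCell c) = c from rfl])
    · rw [diagVal_transpose, h]; ring
  · refine ⟨transposeCell c3, mem_image_transpose.mp hc3, ?_⟩
    rw [diagVal_transpose]; omega
  · refine ⟨transposeCell c2, mem_image_transpose.mp hc2, ?_⟩
    rw [diagVal_transpose]; omega

lemma isoData_transpose {S T : Finset Cell} {f : Cell → Cell} (hf : IsoData S T f) :
    IsoData (S.image transposeCell) T (f ∘ transposeCell) := by
  constructor
  · intro c hc
    exact hf.mem _ (mem_image_transpose.mp hc)
  · intro a ha b hb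
    rw [← transposeCell_le]
    exact hf.mono _ (mem_image_transpose.mp ha) _ (mem_image_transpose.mp hb)
  · intro t ht
    obtain ⟨s, hs, hfs⟩ := hf.surj t ht
    exact ⟨transposeCell s, mem_image_transpose.mpr (by rwa [show transposeCell (transposeCell s) = s from rfl]), hfs⟩

lemma isStep_transpose {u : Cell} (h : IsStep u) : IsStep (transposeCell u) := by
  rcases h with rfl | rfl
  · exact Or.inr rfl
  · exact Or.inl rfl

lemma transposeCell_add (a b : Cell) :
    transposeCell (a + b) = transposeCell a + transposeCell b := rfl

/-! ### Forward direction -/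

lemma forward_main {S T : Finset Cell} {f : Cell → Cell} (hf : IsoData S T f)
    (hS : IsSkewDiagram S) (hT : IsSkewDiagram T) (hcS : SkewConnected S) :
    TranslateEq S T ∨ TranslateEq (S.image transposeCell) T := by
  by_cases hedge : ∃ a u, IsStep u ∧ a ∈ S ∧ a + u ∈ S
  · obtain ⟨a, u, hu, ha, hau⟩ := hedge
    obtain ⟨w, hw, hfw⟩ := step_image hf hT ha hau hu
    by_cases huw : w = u
    · left
      exact main_translate hf hS hT hcS ha hu hau (by rw [Same, hfw, huw])
    · right
      have hw' : w = transposeCell u := by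
        rcases hu with rfl | rfl <;> rcases hw with rfl | rfl <;>
          first | (exact absurd rfl huw) | rfl
      refine main_translate (isoData_transpose hf) (isSkew_image hS) hT
        (skewConnected_image hcS) (a₀ := transposeCell a) (u₀ := transposeCell u)
        (mem_image_transpose.mpr (by rwa [show transposeCell (transposeCell a) = a from rfl]))
        (isStep_transpose hu) ?_ ?_
      · rw [← transposeCell_add]
        exact mem_image_transpose.mpr
          (by rwa [show transposeCell (transposeCell (a + u)) = a + u from rfl])
      · show (f ∘ transposeCell) (transposeCell a + transposeCell u)
          = (f ∘ transposeCell) (transposeCell a) + transposeCell u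
        simp only [Function.comp_apply, ← transposeCell_add]
        rw [show transposeCell (transposeCell (a + u)) = a + u from rfl,
          show transposeCell (transposeCell a) = a from rfl, hfw, hw']
  · left
    have hsub : ∀ a ∈ S, ∀ b ∈ S, a = b := by
      intro a ha b hb
      by_contra hne
      rcases Relation.ReflTransGen.cases_head (conn hS hcS a b ha hb) with h | ⟨c, hac, -⟩
      · exact hne h
      · obtain ⟨ha', hc', u, hu, h1 | h1⟩ := hac
        · exact hedge ⟨a, u, hu, ha', h1 ▸ hc'⟩
        · exact hedge ⟨c, u, hu, hc', h1 ▸ ha'⟩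
    rcases Finset.eq_empty_or_nonempty S with rfl | ⟨a, ha⟩
    · refine ⟨0, ?_⟩
      have hTe : T = ∅ := Finset.eq_empty_of_forall_notMem fun t ht => by
        obtain ⟨c, hc, -⟩ := hf.surj t ht
        exact absurd hc (Finset.notMem_empty c)
      simp [hTe]
    · refine ⟨f a - a, ?_⟩
      ext t
      simp only [Finset.mem_image]
      constructor
      · intro ht
        obtain ⟨c, hc, hfc⟩ := hf.surj t ht
        refine ⟨a, ha, ?_⟩
        rw [← hfc, hsub c hc a ha]; abel
      · rintro ⟨c, hc, rfl⟩
        have hca : c = a := hsub c hc a ha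
        subst hca
        have := hf.mem c hc
        have he : c + (f c - c) = f c := by abel
        rwa [he]

/-! ### Backward direction -/

def translateIso (S : Finset Cell) (v : Cell) :
    {c : Cell // c ∈ S} ≃o {c : Cell // c ∈ S.image (· + v)} where
  toFun c := ⟨c.1 + v, Finset.mem_image_of_mem _ c.2⟩
  invFun c := ⟨c.1 - v, by
    obtain ⟨s, hs, hsv⟩ := Finset.mem_image.mp c.2
    have : c.1 - v = s := by rw [← hsv]; abel
    rwa [this]⟩
  left_inv c := Subtype.ext (by simp)
  right_inv c := Subtype.ext (by simp)
  map_rel_iff' {c d} := by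
    simp only [Equiv.coe_fn_mk, ← Subtype.coe_le_coe]
    exact add_le_add_iff_right v

def transposeIso (S : Finset Cell) :
    {c : Cell // c ∈ S} ≃o {c : Cell // c ∈ S.image transposeCell} where
  toFun c := ⟨transposeCell c.1, Finset.mem_image_of_mem _ c.2⟩
  invFun c := ⟨transposeCell c.1, mem_image_transpose.mp c.2⟩
  left_inv c := Subtype.ext rfl
  right_inv c := Subtype.ext rfl
  map_rel_iff' {c d} := by
    simp only [Equiv.coe_fn_mk, ← Subtype.coe_le_coe]
    exact transposeCell_le


/-- for connected skew diagrams θ, θ′, the box posets `P(θ)` and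
`P(θ′)` (the componentwise order on the cells, which is the order generated by the
covering relations) are isomorphic iff `θ = θ′` or `θ^T = θ′` as translation
classes of skew diagrams. -/
theorem posetIso_iff_eq_or_transpose
    (S T : Finset Cell) (hS : IsSkewDiagram S) (hT : IsSkewDiagram T)
    (hcS : SkewConnected S) (hcT : SkewConnected T) :
    Nonempty ({c : Cell // c ∈ S} ≃o {c : Cell // c ∈ T}) ↔
      (TranslateEq S T ∨ TranslateEq (S.image transposeCell) T) := by

  classical
  constructor
  · rintro ⟨e⟩
    set f : Cell → Cell := fun c => if h : c ∈ S then (e ⟨c, h⟩ : Cell) else c with hfdef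
    have hf : IsoData S T f := by
      constructor
      · intro c hc
        simp only [hfdef, dif_pos hc]
        exact (e ⟨c, hc⟩).2
      · intro a ha b hb
        simp only [hfdef, dif_pos ha, dif_pos hb]
        rw [Subtype.coe_le_coe, OrderIso.le_iff_le, Subtype.mk_le_mk]
      · intro t ht
        refine ⟨(e.symm ⟨t, ht⟩).1, (e.symm ⟨t, ht⟩).2, ?_⟩
        simp only [hfdef, dif_pos (e.symm ⟨t, ht⟩).2]
        rw [show (⟨(e.symm ⟨t, ht⟩).1, (e.symm ⟨t, ht⟩).2⟩ : {c : Cell // c ∈ S})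
            = e.symm ⟨t, ht⟩ from rfl]
        rw [OrderIso.apply_symm_apply]
    exact forward_main hf hS hT hcS
  · rintro (⟨v, rfl⟩ | ⟨v, rfl⟩)
    · exact ⟨translateIso S v⟩
    · exact ⟨(transposeIso S).trans (translateIso _ v)⟩
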